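/- In the topological space X = {1,2,3} with topology {∅, X, {1}, {2}, {1,2}}, the sets {1} and {2} are e*-θ-closed but their union {1,2} is not e*-θ-closed. -/
import Mathlib


open Set Topology

variable {X : Type*} [TopologicalSpace X]

/-- δ-closure of A. -/
def deltaCl (A : Set X) : Set X :=
  {x | ∀ U : Set X, IsOpen U → x ∈ U → (interior (closure U) ∩ A).Nonempty}

/-- A is e*-open if A ⊆ cl(int(δ-cl A)). -/
def EStarOpen (A : Set X) : Prop := A ⊆ closure (interior (deltaCl A))

/-- A is e*-closed if its complement is e*-open. -/
def EStarClosed (A : Set X) : Prop := EStarOpen Aᶜ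

/-- e*-closure: intersection of all e*-closed supersets. -/
def eStarCl (A : Set X) : Set X := ⋂₀ {F | EStarClosed F ∧ A ⊆ F}

/-- e*-interior: union of all e*-open subsets. -/
def eStarInt (A : Set X) : Set X := ⋃₀ {U | EStarOpen U ∧ U ⊆ A}

/-- e*-regular: both e*-open and e*-closed. -/
def EStarRegular (A : Set X) : Prop := EStarOpen A ∧ EStarClosed A

/-- e*-θ-closure. -/
def eStarClTheta (A : Set X) : Set X :=
  {x | ∀ U : Set X, EStarOpen U → x ∈ U → (eStarCl U ∩ A).Nonempty}

/-- e*-θ-closed. -/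
def EStarThetaClosed (A : Set X) : Prop := A = eStarClTheta A

/-- e*-θ-open. -/
def EStarThetaOpen (A : Set X) : Prop := EStarThetaClosed Aᶜ

/-- quasi e*-θ-closed. -/
def QEStarThetaClosed (A : Set X) : Prop :=
  ∀ U : Set X, EStarThetaOpen U → A ⊆ U → eStarClTheta A ⊆ U

/-- e*-θ-kernel. -/
def eStarKerTheta (A : Set X) : Set X := ⋂₀ {U | EStarThetaOpen U ∧ A ⊆ U}

/- ### Generic lemmas -/

lemma subset_deltaCl' (A : Set X) : A ⊆ deltaCl A :=
  fun x hx U hU hxU => ⟨x, interior_maximal subset_closure hU hxU, hx⟩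

lemma deltaCl_mono' {A B : Set X} (h : A ⊆ B) : deltaCl A ⊆ deltaCl B :=
  fun x hx U hU hxU => (hx U hU hxU).imp fun _ hy => ⟨hy.1, h hy.2⟩

lemma isOpen_eStarOpen' {A : Set X} (h : IsOpen A) : EStarOpen A :=
  fun x hx => subset_closure (interior_maximal (subset_deltaCl' A) h hx)

lemma subset_eStarCl' (A : Set X) : A ⊆ eStarCl A :=
  fun x hx => mem_sInter.mpr fun _ hF => hF.2 hx

lemma eStarCl_subset_of_closed' {A : Set X} (h : EStarClosed A) : eStarCl A ⊆ A :=
  sInter_subset_of_mem ⟨h, subset_rfl⟩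

lemma subset_eStarClTheta' (A : Set X) : A ⊆ eStarClTheta A :=
  fun x hx U hU hxU => ⟨x, subset_eStarCl' U hxU, hx⟩

/- ### The specific topology -/

@[reducible] def τ3 : TopologicalSpace (Fin 3) := TopologicalSpace.generateFrom {{0}, {1}}

section Tau3

attribute [local instance] τ3

lemma gen_mem_two {U : Set (Fin 3)} (h : TopologicalSpace.GenerateOpen {{0}, {1}} U) :
    (2 : Fin 3) ∈ U → (0 : Fin 3) ∈ U ∧ (1 : Fin 3) ∈ U := by
  induction h with
  | basic s hs =>
    intro h2
    rcases hs with rfl | rfl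
    · exact absurd h2 (by decide)
    · exact absurd h2 (by decide)
  | univ => intro _; exact ⟨trivial, trivial⟩
  | inter s t _ _ ihs iht =>
    intro h2
    exact ⟨⟨(ihs h2.1).1, (iht h2.2).1⟩, (ihs h2.1).2, (iht h2.2).2⟩
  | sUnion S _ ih =>
    rintro ⟨s, hsS, h2⟩
    exact ⟨⟨s, hsS, (ih s hsS h2).1⟩, ⟨s, hsS, (ih s hsS h2).2⟩⟩

lemma open_mem_two {U : Set (Fin 3)} (h : IsOpen U) (h2 : (2 : Fin 3) ∈ U) :
    (0 : Fin 3) ∈ U ∧ (1 : Fin 3) ∈ U :=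
  gen_mem_two h h2

lemma isOpen0 : IsOpen ({0} : Set (Fin 3)) :=
  TopologicalSpace.GenerateOpen.basic _ (Or.inl rfl)

lemma isOpen1 : IsOpen ({1} : Set (Fin 3)) :=
  TopologicalSpace.GenerateOpen.basic _ (Or.inr rfl)

lemma eStar0 : EStarOpen ({0} : Set (Fin 3)) := isOpen_eStarOpen' isOpen0
lemma eStar1 : EStarOpen ({1} : Set (Fin 3)) := isOpen_eStarOpen' isOpen1

lemma eStar02 : EStarOpen ({0, 2} : Set (Fin 3)) := by
  have hsub : ({0} : Set (Fin 3)) ⊆ interior (deltaCl {0, 2}) :=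
    interior_maximal
      (Subset.trans (by intro y hy; exact Or.inl hy) (subset_deltaCl' _)) isOpen0
  intro x hx
  rcases hx with rfl | hx
  · exact subset_closure (hsub rfl)
  · rcases hx with rfl
    exact mem_closure_iff.mpr fun o ho h2o => ⟨0, (open_mem_two ho h2o).1, hsub rfl⟩

lemma eStar12 : EStarOpen ({1, 2} : Set (Fin 3)) := by
  have hsub : ({1} : Set (Fin 3)) ⊆ interior (deltaCl {1, 2}) :=
    interior_maximal
      (Subset.trans (by intro y hy; exact Or.inl hy) (subset_deltaCl' _)) isOpen1
  intro x hx
  rcases hx with rfl | hx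
  · exact subset_closure (hsub rfl)
  · rcases hx with rfl
    exact mem_closure_iff.mpr fun o ho h2o => ⟨1, (open_mem_two ho h2o).2, hsub rfl⟩

lemma closed1 : EStarClosed ({1} : Set (Fin 3)) := by
  have h : ({1}ᶜ : Set (Fin 3)) = {0, 2} := by
    ext x; fin_cases x <;> simp
  unfold EStarClosed
  rw [h]
  exact eStar02

lemma closed0 : EStarClosed ({0} : Set (Fin 3)) := by
  have h : ({0}ᶜ : Set (Fin 3)) = {1, 2} := by
    ext x; fin_cases x <;> simp
  unfold EStarClosed
  rw [h]
  exact eStar12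

lemma closed12 : EStarClosed ({1, 2} : Set (Fin 3)) := by
  have h : ({1, 2}ᶜ : Set (Fin 3)) = {0} := by
    ext x; fin_cases x <;> simp
  unfold EStarClosed
  rw [h]
  exact eStar0

lemma closed02 : EStarClosed ({0, 2} : Set (Fin 3)) := by
  have h : ({0, 2}ᶜ : Set (Fin 3)) = {1} := by
    ext x; fin_cases x <;> simp
  unfold EStarClosed
  rw [h]
  exact eStar1

lemma two_notMem_int {F : Set (Fin 3)} (h1 : (1 : Fin 3) ∉ F) : (2 : Fin 3) ∉ interior F := by
  intro h
  obtain ⟨V, hVF, hVopen, h2V⟩ := mem_interior.mp h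
  exact h1 (hVF (open_mem_two hVopen h2V).2)

lemma deltaCl_two : deltaCl ({2} : Set (Fin 3)) ⊆ {2} := by
  intro x hx
  fin_cases x
  · exfalso
    obtain ⟨y, hy1, hy2⟩ := hx {0} isOpen0 rfl
    rcases hy2 with rfl
    have hcl : closure ({0} : Set (Fin 3)) ⊆ {0, 2} := by
      have heq : ({0, 2} : Set (Fin 3)) = {1}ᶜ := by ext z; fin_cases z <;> simp
      refine closure_minimal (by intro z hz; exact Or.inl hz) ?_
      rw [heq]; exact isOpen1.isClosed_compl
    exact two_notMem_int (by decide) (interior_mono hcl hy1)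
  · exfalso
    obtain ⟨y, hy1, hy2⟩ := hx {1} isOpen1 rfl
    rcases hy2 with rfl
    have hcl : closure ({1} : Set (Fin 3)) ⊆ {1, 2} := by
      have heq : ({1, 2} : Set (Fin 3)) = {0}ᶜ := by ext z; fin_cases z <;> simp
      refine closure_minimal (by intro z hz; exact Or.inl hz) ?_
      rw [heq]; exact isOpen0.isClosed_compl
    obtain ⟨V, hVF, hVopen, h2V⟩ := mem_interior.mp (interior_mono hcl hy1)
    have := hVF (open_mem_two hVopen h2V).1
    exact absurd this (by decide)
  · exact rfl

lemma int_two : interior ({2} : Set (Fin 3)) = ∅ := by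
  rw [eq_empty_iff_forall_notMem]
  intro x hx
  obtain ⟨V, hVF, hVopen, hxV⟩ := mem_interior.mp hx
  have hx2 : x = 2 := hVF hxV
  subst hx2
  exact absurd (hVF (open_mem_two hVopen hxV).1) (by decide)

lemma not_eStar_small {U : Set (Fin 3)} (hU2 : U ⊆ {2}) (hU : EStarOpen U)
    (h2 : (2 : Fin 3) ∈ U) : False := by
  have hint : interior (deltaCl U) ⊆ (∅ : Set (Fin 3)) := by
    rw [← int_two]
    exact interior_mono ((deltaCl_mono' hU2).trans deltaCl_two)
  have h1 : closure (interior (deltaCl U)) ⊆ (∅ : Set (Fin 3)) := by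
    calc closure (interior (deltaCl U)) ⊆ closure (∅ : Set (Fin 3)) :=
          closure_mono hint
      _ = ∅ := closure_empty
  exact absurd (h1 (hU h2)) (notMem_empty _)

lemma thetaClosed0 : EStarThetaClosed ({0} : Set (Fin 3)) := by
  refine (subset_eStarClTheta' _).antisymm ?_
  intro x hx
  fin_cases x
  · exact rfl
  · obtain ⟨y, hy1, hy2⟩ := hx {1} eStar1 rfl
    rcases hy2 with rfl
    have h := eStarCl_subset_of_closed' closed1 hy1
    simp at h
  · obtain ⟨y, hy1, hy2⟩ := hx {1, 2} eStar12 (Or.inr rfl)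
    rcases hy2 with rfl
    have h := eStarCl_subset_of_closed' closed12 hy1
    simp at h

lemma thetaClosed1 : EStarThetaClosed ({1} : Set (Fin 3)) := by
  refine (subset_eStarClTheta' _).antisymm ?_
  intro x hx
  fin_cases x
  · obtain ⟨y, hy1, hy2⟩ := hx {0} eStar0 rfl
    rcases hy2 with rfl
    have h := eStarCl_subset_of_closed' closed0 hy1
    simp at h
  · exact rfl
  · obtain ⟨y, hy1, hy2⟩ := hx {0, 2} eStar02 (Or.inr rfl)
    rcases hy2 with rfl
    have h := eStarCl_subset_of_closed' closed02 hy1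
    simp at h

lemma not_thetaClosed01 : ¬ EStarThetaClosed ({0, 1} : Set (Fin 3)) := by
  intro h
  have h2 : (2 : Fin 3) ∈ eStarClTheta ({0, 1} : Set (Fin 3)) := by
    intro U hU h2U
    have hne : (U ∩ {0, 1}).Nonempty := by
      by_contra hne
      have hsub : U ⊆ {2} := by
        intro y hy
        fin_cases y
        · exact absurd (⟨0, hy, Or.inl rfl⟩ : (U ∩ ({0, 1} : Set (Fin 3))).Nonempty) hne
        · exact absurd (⟨1, hy, Or.inr rfl⟩ : (U ∩ ({0, 1} : Set (Fin 3))).Nonempty) hne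
        · exact rfl
      exact not_eStar_small hsub hU h2U
    obtain ⟨y, hyU, hy01⟩ := hne
    exact ⟨y, subset_eStarCl' U hyU, hy01⟩
  rw [← h] at h2
  rcases h2 with h2 | h2 <;> exact absurd h2 (by decide)

end Tau3

theorem stmt6 :
    letI τ : TopologicalSpace (Fin 3) := TopologicalSpace.generateFrom {{0}, {1}}
    @EStarThetaClosed (Fin 3) τ {0} ∧ @EStarThetaClosed (Fin 3) τ {1} ∧
      ¬ @EStarThetaClosed (Fin 3) τ {0, 1} :=
  ⟨thetaClosed0, thetaClosed1, not_thetaClosed01⟩
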